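/- Let A be an N×N integer matrix. Let Ā be the (N+3)×(N+3) matrix of equation (1) (Parry–Sullivan expansion followed by Cuntz splice) and let Ã be the (N+3)×(N+3) matrix identical to Ā except that its (N+2,N+2)-entry is 0 instead of 1. Then det(1-Ā) = det(1-Ã). -/

import Mathlib

/-- Parry–Sullivan expansion at vertex `N = n+1` of an `N × N` matrix `A`:
first `N-1` rows are those of `A` with a `0` appended in column `N+1`,
row `N` is the standard basis vector `e_{N+1}`, and
row `N+1` is row `N` of `A` with a `0` appended. -/
def psExpansion {n : ℕ} (A : Matrix (Fin (n+1)) (Fin (n+1)) ℤ) :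
    Matrix (Fin (n+2)) (Fin (n+2)) ℤ :=
  Matrix.of fun i j =>
    if hi : (i : ℕ) < n then
      if hj : (j : ℕ) < n + 1 then A ⟨i, Nat.lt_succ_of_lt hi⟩ ⟨j, hj⟩ else 0
    else if (i : ℕ) = n then
      if (j : ℕ) = n + 1 then 1 else 0
    else
      if hj : (j : ℕ) < n + 1 then A ⟨n, Nat.lt_succ_self n⟩ ⟨j, hj⟩ else 0

/-- Cuntz splice of an `M × M` matrix `B` (`M = m+1`): the `(M+2) × (M+2)` matrix whose
upper-left `M × M` block is `B`, with (1-based) entries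
`B₋(M,M+1) = B₋(M+1,M) = B₋(M+1,M+1) = B₋(M+1,M+2) = B₋(M+2,M+1) = B₋(M+2,M+2) = 1`
and all other new entries `0`. -/
def cuntzSplice {m : ℕ} (B : Matrix (Fin (m+1)) (Fin (m+1)) ℤ) :
    Matrix (Fin (m+3)) (Fin (m+3)) ℤ :=
  Matrix.of fun i j =>
    if hi : (i : ℕ) < m + 1 then
      if hj : (j : ℕ) < m + 1 then B ⟨i, hi⟩ ⟨j, hj⟩
      else if (i : ℕ) = m ∧ (j : ℕ) = m + 1 then 1 else 0
    else
      if (i : ℕ) = m + 1 then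
        if (j : ℕ) = m ∨ (j : ℕ) = m + 1 ∨ (j : ℕ) = m + 2 then 1 else 0
      else
        if (j : ℕ) = m + 1 ∨ (j : ℕ) = m + 2 then 1 else 0

/-- The matrix `Ã`: identical to `Ā = (A°)₋` except that its `(N+2,N+2)`-entry
(1-based; 0-based index `(n+2,n+2)`) is `0` instead of `1`. -/
def tildeMatrix {n : ℕ} (A : Matrix (Fin (n+1)) (Fin (n+1)) ℤ) :
    Matrix (Fin (n+4)) (Fin (n+4)) ℤ :=
  Matrix.of fun i j =>
    if (i : ℕ) = n + 2 ∧ (j : ℕ) = n + 2 then 0 else cuntzSplice (psExpansion A) i j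

/-- `det(1 - Ā) = det(1 - Ã)`. -/
theorem det_bar_eq_det_tilde {n : ℕ} (A : Matrix (Fin (n+1)) (Fin (n+1)) ℤ) :
    ((1 : Matrix (Fin (n+4)) (Fin (n+4)) ℤ) - cuntzSplice (psExpansion A)).det
      = ((1 : Matrix (Fin (n+4)) (Fin (n+4)) ℤ) - tildeMatrix A).det := by
  set Ab := cuntzSplice (psExpansion A) with hAb
  set M : Matrix (Fin (n+4)) (Fin (n+4)) ℤ := 1 - Ab with hM
  set i2 : Fin (n+4) := ⟨n+2, by omega⟩ with hi2
  set i3 : Fin (n+4) := ⟨n+3, by omega⟩ with hi3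
  have hAb22 : Ab i2 i2 = 1 := by
    simp [hAb, cuntzSplice, hi2]
  have h1 : (1 : Matrix (Fin (n+4)) (Fin (n+4)) ℤ) - tildeMatrix A
      = M.updateRow i2 (M i2 + Pi.single i2 1) := by
    ext i j
    by_cases hi : i = i2
    · subst hi
      by_cases hj : j = i2
      · subst hj
        simp [Matrix.updateRow_self, tildeMatrix, hM, Matrix.sub_apply,
          Matrix.one_apply, hAb22, hi2, hAb, cuntzSplice]
      · have hj' : (j : ℕ) ≠ n + 2 := fun h => hj (Fin.ext (by simp [hi2, h]))
        simp [Matrix.updateRow_self, tildeMatrix, hM, Matrix.sub_apply,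
          Pi.single_apply, hj, hj', hi2, hAb, Fin.ext_iff]
    · have hi' : (i : ℕ) ≠ n + 2 := fun h => hi (Fin.ext (by simp [hi2, h]))
      simp [Matrix.updateRow_ne hi, tildeMatrix, hM, Matrix.sub_apply, hi', hAb]
  have hrow3 : M i3 = -(Pi.single i2 1) := by
    funext j
    have hj2 : (i3 : ℕ) = n + 3 := rfl
    have hf1 : ¬ (n + 3 < n + 1 + 1) := by omega
    have hf2 : ¬ (n + 3 = n + 1 + 1) := by omega
    by_cases hj : (j : ℕ) = n + 2
    · have : j = i2 := Fin.ext (by simp [hi2, hj])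
      subst this
      have hf1 : ¬ (n + 3 < n + 1 + 1) := by omega
      have hf2 : ¬ (n + 3 = n + 1 + 1) := by omega
      simp [hM, Matrix.sub_apply, Matrix.one_apply, hAb, cuntzSplice, hi2, hi3,
        Fin.ext_iff, Pi.single_apply, hf1, hf2]
    · have hji2 : j ≠ i2 := fun h => hj (by simp [h, hi2])
      by_cases hj3 : (j : ℕ) = n + 3
      · have : j = i3 := Fin.ext (by simp [hi3, hj3])
        subst this
        simp [hM, Matrix.sub_apply, Matrix.one_apply, hAb, cuntzSplice, hi2, hi3,
          Fin.ext_iff, Pi.single_apply, hf1, hf2]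
      · simp [hM, Matrix.sub_apply, Matrix.one_apply, hAb, cuntzSplice, hi3,
          Pi.single_apply, hji2, hj, hj3, Fin.ext_iff, hf1, hf2]
        omega
  have hne : i3 ≠ i2 := by simp [hi2, hi3, Fin.ext_iff]
  have hKdet : (M.updateRow i2 (Pi.single i2 1)).det = 0 := by
    set K := M.updateRow i2 (Pi.single i2 1) with hK
    have h0 : K i3 + (1 : ℤ) • K i2 = 0 := by
      simp [hK, Matrix.updateRow_ne hne, Matrix.updateRow_self, hrow3]
    calc K.det = (K.updateRow i3 (K i3 + (1 : ℤ) • K i2)).det :=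
          (Matrix.det_updateRow_add_smul_self K hne 1).symm
      _ = 0 := by
          apply Matrix.det_eq_zero_of_row_eq_zero i3
          intro j
          rw [Matrix.updateRow_self, h0]
          rfl
  rw [h1, Matrix.det_updateRow_add, Matrix.updateRow_eq_self, hKdet, add_zero]
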